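/- arXiv:2603.28469 — 4 statements merged into one kernel-verified Lean document; each statement's English description precedes it below -/
import Mathlib

section
/- Let n ≥ 1, q ∈ ℍ^n, and let ω be a purely imaginary quaternion. Then the quaternion 1 + |q|² + ω has real part 1 + |q|² ≥ 1, hence is invertible, and the point C(q,ω) = ((1+|q|²+ω)^{-1}(2q), (1+|q|²+ω)^{-1}(1−|q|²−ω)) ∈ ℍ^{n+1} lies on the unit sphere S^{4n+3}, i.e. |C(q,ω)| = 1. -/
set_option maxHeartbeats 1000000

open Quaternion Finset

lemma sq_norm_quat (a : Quaternion ℝ) : ‖a‖ ^ 2 = normSq a := by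
  rw [sq, ← Quaternion.normSq_eq_norm_mul_self]

lemma norm_two_quat : ‖(2 : Quaternion ℝ)‖ = 2 := by
  rw [show ((2:Quaternion ℝ)) = ((2:ℝ):Quaternion ℝ) by norm_cast, Quaternion.norm_coe]
  norm_num

/-- For `q ∈ ℍ^n` and a purely imaginary quaternion `ω`, the quaternion `1 + |q|² + ω`
has real part `1 + |q|² ≥ 1`, hence is invertible, and the quaternionic Cayley transform
`C(q,ω) = ((1+|q|²+ω)⁻¹(2q), (1+|q|²+ω)⁻¹(1−|q|²−ω))` lies on the unit sphere
`S^{4n+3}`, i.e. `|C(q,ω)| = 1`. -/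
theorem stmt7 (n : ℕ) (hn : 1 ≤ n) (q : Fin n → Quaternion ℝ) (ω : Quaternion ℝ)
    (hω : ω.re = 0)
    (A : Quaternion ℝ) (hA : A = (((1 + ∑ ℓ, ‖q ℓ‖ ^ 2 : ℝ)) : Quaternion ℝ) + ω) :
    A.re = 1 + ∑ ℓ, ‖q ℓ‖ ^ 2 ∧
    1 ≤ A.re ∧
    IsUnit A ∧
    (∑ ℓ, ‖A⁻¹ * (2 * q ℓ)‖ ^ 2) +
      ‖A⁻¹ * ((((1 - ∑ ℓ, ‖q ℓ‖ ^ 2 : ℝ)) : Quaternion ℝ) - ω)‖ ^ 2 = 1 := by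
  set s : ℝ := ∑ ℓ, ‖q ℓ‖ ^ 2 with hs
  have hs0 : 0 ≤ s := Finset.sum_nonneg fun ℓ _ => sq_nonneg _
  have hre : A.re = 1 + s := by
    simp [hA, hω]
  have h1 : (1 : ℝ) ≤ A.re := by rw [hre]; linarith
  have hAne : A ≠ 0 := by
    intro h
    rw [h] at hre
    simp at hre
    linarith
  refine ⟨hre, h1, isUnit_iff_ne_zero.2 hAne, ?_⟩
  have hnormA : ‖A‖ ^ 2 = (1 + s) ^ 2 + (ω.imI ^ 2 + ω.imJ ^ 2 + ω.imK ^ 2) := by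
    rw [sq_norm_quat, Quaternion.normSq_def']
    simp [hA, hω]
    ring
  have hApos : 0 < ‖A‖ ^ 2 := by rw [hnormA]; nlinarith [sq_nonneg ω.imI, sq_nonneg ω.imJ, sq_nonneg ω.imK]
  have hnormB : ‖(((1 - s : ℝ)) : Quaternion ℝ) - ω‖ ^ 2
      = (1 - s) ^ 2 + (ω.imI ^ 2 + ω.imJ ^ 2 + ω.imK ^ 2) := by
    rw [sq_norm_quat, Quaternion.normSq_def']
    simp [hω]
    ring
  have key : ∀ x : Quaternion ℝ, ‖A⁻¹ * x‖ ^ 2 = (‖A‖ ^ 2)⁻¹ * ‖x‖ ^ 2 := by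
    intro x
    rw [norm_mul, mul_pow, norm_inv, inv_pow]
  have h2q : ∀ ℓ, ‖(2 : Quaternion ℝ) * q ℓ‖ ^ 2 = 4 * ‖q ℓ‖ ^ 2 := by
    intro ℓ
    rw [norm_mul, mul_pow, norm_two_quat]
    norm_num
  calc (∑ ℓ, ‖A⁻¹ * (2 * q ℓ)‖ ^ 2) + ‖A⁻¹ * ((((1 - s : ℝ)) : Quaternion ℝ) - ω)‖ ^ 2
      = (∑ ℓ, (‖A‖ ^ 2)⁻¹ * (4 * ‖q ℓ‖ ^ 2)) + (‖A‖ ^ 2)⁻¹ * ‖(((1 - s : ℝ)) : Quaternion ℝ) - ω‖ ^ 2 := by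
        rw [key]
        congr 1
        refine Finset.sum_congr rfl fun ℓ _ => ?_
        rw [key, h2q]
    _ = (‖A‖ ^ 2)⁻¹ * (4 * s + ‖(((1 - s : ℝ)) : Quaternion ℝ) - ω‖ ^ 2) := by
        rw [← Finset.mul_sum, ← mul_add, ← Finset.mul_sum]
    _ = (‖A‖ ^ 2)⁻¹ * ‖A‖ ^ 2 := by
        rw [hnormB, hnormA]
        ring_nf
    _ = 1 := inv_mul_cancel₀ (ne_of_gt hApos)
end

section
/- Let n ≥ 1, q ∈ ℍ^n, and let ω be a purely imaginary quaternion. Write C(q,ω) = (ζ', ζ_{n+1}) ∈ ℍ^n × ℍ. Then 1 + ζ_{n+1} is invertible and C^{-1}(C(q,ω)) = (q, ω), i.e. (1+ζ_{n+1})^{-1}ζ' = q and Im((1+ζ_{n+1})^{-1}(1−ζ_{n+1})) = ω. -/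
open Quaternion Finset

/-- `C⁻¹ ∘ C = id`: for `q ∈ ℍ^n` and purely imaginary `ω`, writing
`C(q,ω) = (ζ', ζ_{n+1})`, the quaternion `1 + ζ_{n+1}` is invertible,
`(1+ζ_{n+1})⁻¹ ζ' = q`, and `Im((1+ζ_{n+1})⁻¹(1−ζ_{n+1})) = ω`. -/
theorem stmt8 (n : ℕ) (hn : 1 ≤ n) (q : Fin n → Quaternion ℝ) (ω : Quaternion ℝ)
    (hω : ω.re = 0)
    (A : Quaternion ℝ) (hA : A = (((1 + ∑ ℓ, ‖q ℓ‖ ^ 2 : ℝ)) : Quaternion ℝ) + ω)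
    (ζ' : Fin n → Quaternion ℝ) (hζ' : ∀ ℓ, ζ' ℓ = A⁻¹ * (2 * q ℓ))
    (ζlast : Quaternion ℝ)
    (hζlast : ζlast = A⁻¹ * ((((1 - ∑ ℓ, ‖q ℓ‖ ^ 2 : ℝ)) : Quaternion ℝ) - ω)) :
    IsUnit (1 + ζlast) ∧
    (∀ ℓ, (1 + ζlast)⁻¹ * ζ' ℓ = q ℓ) ∧
    ((1 + ζlast)⁻¹ * (1 - ζlast)).im = ω := by
  set s : ℝ := ∑ ℓ, ‖q ℓ‖ ^ 2 with hs
  have hs0 : 0 ≤ s := Finset.sum_nonneg fun ℓ _ => by positivity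
  have h2 : (2 : Quaternion ℝ) ≠ 0 := by
    intro h
    have h' : ((2 : Quaternion ℝ)).re = 0 := by rw [h]; simp
    rw [show (2 : Quaternion ℝ) = 1 + 1 from (one_add_one_eq_two).symm] at h'
    simp at h'
  have h2' : ((2 : ℝ) : Quaternion ℝ) = 2 := by
    rw [show (2 : ℝ) = 1 + 1 by norm_num]; push_cast; norm_num
  have hAne : A ≠ 0 := by
    intro h
    have : A.re = 1 + s := by simp [hA, hω]
    rw [h] at this
    simp at this
    linarith
  have hcast : ∀ x : ℝ, ((1 - x : ℝ) : Quaternion ℝ) = 1 - (x : Quaternion ℝ) := by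
    intro x; push_cast; ring
  have hcast' : ((1 + s : ℝ) : Quaternion ℝ) = 1 + (s : Quaternion ℝ) := by
    push_cast; ring
  have key : 1 + ζlast = A⁻¹ * 2 := by
    rw [hζlast]
    have h1 : (1 : Quaternion ℝ) = A⁻¹ * A := (inv_mul_cancel₀ hAne).symm
    rw [h1, ← mul_add, hA]
    congr 1
    rw [hcast, hcast']
    noncomm_ring
    simp
  have key2 : (1 + ζlast)⁻¹ = 2⁻¹ * A := by
    rw [key, mul_inv_rev, inv_inv]
  refine ⟨?_, ?_, ?_⟩
  · rw [key]
    exact isUnit_iff_ne_zero.2 (mul_ne_zero (inv_ne_zero hAne) h2)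
  · intro ℓ
    rw [key2, hζ' ℓ, mul_assoc, ← mul_assoc A, mul_inv_cancel₀ hAne, one_mul,
      ← mul_assoc, inv_mul_cancel₀ h2, one_mul]
  · have key3 : 1 - ζlast = A⁻¹ * (2 * ((s : Quaternion ℝ) + ω)) := by
      rw [hζlast]
      have h1 : (1 : Quaternion ℝ) = A⁻¹ * A := (inv_mul_cancel₀ hAne).symm
      rw [h1, ← mul_sub, hA]
      congr 1
      rw [hcast, hcast']
      noncomm_ring
    rw [key2, key3, mul_assoc, ← mul_assoc A, mul_inv_cancel₀ hAne, one_mul,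
      ← mul_assoc, inv_mul_cancel₀ h2, one_mul]
    ext <;> simp [hω]
end

section
/- Let n ≥ 1 and let ζ = (ζ', ζ_{n+1}) ∈ ℍ^n × ℍ lie on the unit sphere S^{4n+3} with ζ_{n+1} ≠ −1. Then 1 + ζ_{n+1} is invertible, the pair C^{-1}(ζ) = ((1+ζ_{n+1})^{-1}ζ', Im((1+ζ_{n+1})^{-1}(1−ζ_{n+1}))) lies in ℍ^n × Im ℍ, and C(C^{-1}(ζ)) = ζ. -/
open Quaternion Finset

set_option maxHeartbeats 1600000 in
/-- `C ∘ C⁻¹ = id` on the sphere minus the pole: if `ζ = (ζ', ζ_{n+1}) ∈ S^{4n+3}` with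
`ζ_{n+1} ≠ −1`, then `1 + ζ_{n+1}` is invertible, `C⁻¹(ζ)` lies in `ℍ^n × Im ℍ`
(its second component is purely imaginary), and `C(C⁻¹(ζ)) = ζ`. -/
theorem stmt9 (n : ℕ) (hn : 1 ≤ n) (ζ' : Fin n → Quaternion ℝ) (ζlast : Quaternion ℝ)
    (hsphere : (∑ ℓ, ‖ζ' ℓ‖ ^ 2) + ‖ζlast‖ ^ 2 = 1) (hpole : ζlast ≠ -1)
    (q : Fin n → Quaternion ℝ) (hq : ∀ ℓ, q ℓ = (1 + ζlast)⁻¹ * ζ' ℓ)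
    (ω : Quaternion ℝ) (hω : ω = ((1 + ζlast)⁻¹ * (1 - ζlast)).im) :
    IsUnit (1 + ζlast) ∧
    ω.re = 0 ∧
    (∀ ℓ, ((((1 + ∑ m, ‖q m‖ ^ 2 : ℝ)) : Quaternion ℝ) + ω)⁻¹ * (2 * q ℓ) = ζ' ℓ) ∧
    ((((1 + ∑ m, ‖q m‖ ^ 2 : ℝ)) : Quaternion ℝ) + ω)⁻¹ *
        ((((1 - ∑ m, ‖q m‖ ^ 2 : ℝ)) : Quaternion ℝ) - ω) = ζlast := by
  have ha : (1 + ζlast) ≠ 0 := fun h => hpole (eq_neg_of_add_eq_zero_right h)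
  set N : ℝ := normSq (1 + ζlast) with hNdef
  have hN : N ≠ 0 := normSq_ne_zero.mpr ha
  have hinv : (1 + ζlast)⁻¹ = (N⁻¹ : ℝ) • star (1 + ζlast) := Quaternion.inv_def _
  have hnorm : ∀ x : Quaternion ℝ, ‖x‖ ^ 2 = normSq x := fun x => by
    rw [normSq_eq_norm_mul_self, sq]
  have hKsum : (∑ m, ‖q m‖ ^ 2) = N⁻¹ * (1 - normSq ζlast) := by
    have hS : (∑ ℓ, ‖ζ' ℓ‖ ^ 2) = 1 - normSq ζlast := by rw [← hnorm]; linarith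
    rw [← hS, Finset.mul_sum]
    refine Finset.sum_congr rfl fun m _ => ?_
    rw [hq, hnorm, map_mul, normSq_inv, ← hNdef, ← hnorm]
  have hNre : N = 1 + 2 * ζlast.re + normSq ζlast := by
    rw [hNdef, normSq_def', normSq_def']; simp; ring
  have hnsq : normSq ζlast = ζlast.re ^ 2 + ζlast.imI ^ 2 + ζlast.imJ ^ 2 + ζlast.imK ^ 2 :=
    normSq_def' _
  have hωval : ω = (-(2 * N⁻¹)) • ζlast.im := by
    rw [hω, hinv, smul_mul_assoc, Quaternion.im_smul]
    ext <;> simp <;> ring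
  have h2 : (2 : Quaternion ℝ) = ((2 : ℝ) : Quaternion ℝ) :=
    (map_ofNat (algebraMap ℝ (Quaternion ℝ)) 2).symm
  have hA : ((1 + N⁻¹ * (1 - normSq ζlast) : ℝ) : Quaternion ℝ) + ω = 2 * (1 + ζlast)⁻¹ := by
    rw [hωval, hinv, h2]
    ext <;>
      simp only [Quaternion.re_mul, Quaternion.imI_mul, Quaternion.imJ_mul, Quaternion.imK_mul,
        Quaternion.re_add, Quaternion.imI_add, Quaternion.imJ_add, Quaternion.imK_add,
        Quaternion.re_sub, Quaternion.imI_sub, Quaternion.imJ_sub, Quaternion.imK_sub,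
        Quaternion.re_one, Quaternion.imI_one, Quaternion.imJ_one, Quaternion.imK_one,
        Quaternion.re_coe, Quaternion.imI_coe, Quaternion.imJ_coe, Quaternion.imK_coe,
        Quaternion.re_smul, Quaternion.imI_smul, Quaternion.imJ_smul, Quaternion.imK_smul,
        Quaternion.re_star, Quaternion.imI_star, Quaternion.imJ_star, Quaternion.imK_star,
        Quaternion.re_im, Quaternion.imI_im, Quaternion.imJ_im, Quaternion.imK_im,
        smul_eq_mul] <;>
      field_simp <;> linear_combination (norm := ring_nf) hNre <;> linarith [hnsq]
  have hB : ((1 - N⁻¹ * (1 - normSq ζlast) : ℝ) : Quaternion ℝ) - ω =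
      2 * ζlast * (1 + ζlast)⁻¹ := by
    rw [hωval, hinv, h2]
    ext <;>
      simp only [Quaternion.re_mul, Quaternion.imI_mul, Quaternion.imJ_mul, Quaternion.imK_mul,
        Quaternion.re_add, Quaternion.imI_add, Quaternion.imJ_add, Quaternion.imK_add,
        Quaternion.re_sub, Quaternion.imI_sub, Quaternion.imJ_sub, Quaternion.imK_sub,
        Quaternion.re_one, Quaternion.imI_one, Quaternion.imJ_one, Quaternion.imK_one,
        Quaternion.re_coe, Quaternion.imI_coe, Quaternion.imJ_coe, Quaternion.imK_coe,
        Quaternion.re_smul, Quaternion.imI_smul, Quaternion.imJ_smul, Quaternion.imK_smul,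
        Quaternion.re_star, Quaternion.imI_star, Quaternion.imJ_star, Quaternion.imK_star,
        Quaternion.re_im, Quaternion.imI_im, Quaternion.imJ_im, Quaternion.imK_im,
        smul_eq_mul] <;>
      field_simp <;> linear_combination (norm := ring_nf) hNre <;> linarith [hnsq]
  have h2ne : (2 : Quaternion ℝ) ≠ 0 := by
    rw [h2]
    intro h
    have := congrArg QuaternionAlgebra.re h
    simp at this
  have hcomm : (1 + ζlast) * ζlast = ζlast * (1 + ζlast) := by noncomm_ring
  refine ⟨isUnit_iff_ne_zero.mpr ha, by simp [hω], fun ℓ => ?_, ?_⟩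
  · rw [hKsum, hA, hq, mul_inv_rev, inv_inv]
    calc (1 + ζlast) * 2⁻¹ * (2 * ((1 + ζlast)⁻¹ * ζ' ℓ))
        = (1 + ζlast) * ((2⁻¹ * 2) * ((1 + ζlast)⁻¹ * ζ' ℓ)) := by noncomm_ring
      _ = (1 + ζlast) * ((1 + ζlast)⁻¹ * ζ' ℓ) := by
          rw [inv_mul_cancel₀ h2ne, one_mul]
      _ = ζ' ℓ := by rw [← mul_assoc, mul_inv_cancel₀ ha, one_mul]
  · rw [hKsum, hA, hB, mul_inv_rev, inv_inv]
    calc (1 + ζlast) * 2⁻¹ * (2 * ζlast * (1 + ζlast)⁻¹)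
        = (1 + ζlast) * ((2⁻¹ * 2) * (ζlast * (1 + ζlast)⁻¹)) := by noncomm_ring
      _ = (1 + ζlast) * (ζlast * (1 + ζlast)⁻¹) := by
          rw [inv_mul_cancel₀ h2ne, one_mul]
      _ = ζlast * ((1 + ζlast) * (1 + ζlast)⁻¹) := by
          rw [← mul_assoc, hcomm, mul_assoc]
      _ = ζlast := by rw [mul_inv_cancel₀ ha, mul_one]
end

section
/- Let n ≥ 1, λ > 0, and let ζ = (ζ', ζ_{n+1}) ∈ ℍ^n × ℍ lie on the unit sphere S^{4n+3} with ζ_{n+1} ≠ −1. Then C(δ_λ(C^{-1}(ζ))) = Γ_{λ,N}(ζ), where Γ_{λ,N}(ζ', ζ_{n+1}) = ((1+ζ_{n+1}+λ²(1−ζ_{n+1}))^{-1}(2λ ζ'), (1+ζ_{n+1}+λ²(1−ζ_{n+1}))^{-1}(1+ζ_{n+1}−λ²(1−ζ_{n+1}))). -/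
open Quaternion Finset

/-- Conjugating the Heisenberg dilation `δ_λ` by the quaternionic Cayley transform gives the
conformal map `Γ_{λ,N}`: for `ζ = (ζ', ζ_{n+1}) ∈ S^{4n+3}` with `ζ_{n+1} ≠ −1` and `λ > 0`,
`C(δ_λ(C⁻¹(ζ))) = Γ_{λ,N}(ζ)`, where
`Γ_{λ,N}(ζ', ζ_{n+1}) = ((1+ζ_{n+1}+λ²(1−ζ_{n+1}))⁻¹(2λζ'),
(1+ζ_{n+1}+λ²(1−ζ_{n+1}))⁻¹(1+ζ_{n+1}−λ²(1−ζ_{n+1})))`. -/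
theorem stmt11 (n : ℕ) (hn : 1 ≤ n) (lam : ℝ) (hlam : 0 < lam)
    (ζ' : Fin n → Quaternion ℝ) (ζlast : Quaternion ℝ)
    (hsphere : (∑ ℓ, ‖ζ' ℓ‖ ^ 2) + ‖ζlast‖ ^ 2 = 1) (hpole : ζlast ≠ -1)
    (q : Fin n → Quaternion ℝ) (hq : ∀ ℓ, q ℓ = (1 + ζlast)⁻¹ * ζ' ℓ)
    (ω : Quaternion ℝ) (hω : ω = ((1 + ζlast)⁻¹ * (1 - ζlast)).im)
    (qdil : Fin n → Quaternion ℝ) (hqdil : ∀ ℓ, qdil ℓ = ((lam : ℝ) : Quaternion ℝ) * q ℓ)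
    (ωdil : Quaternion ℝ) (hωdil : ωdil = ((lam ^ 2 : ℝ) : Quaternion ℝ) * ω)
    (B : Quaternion ℝ)
    (hB : B = (((1 + ∑ ℓ, ‖qdil ℓ‖ ^ 2 : ℝ)) : Quaternion ℝ) + ωdil)
    (D : Quaternion ℝ)
    (hD : D = 1 + ζlast + ((lam ^ 2 : ℝ) : Quaternion ℝ) * (1 - ζlast)) :
    (∀ ℓ, B⁻¹ * (2 * qdil ℓ) = D⁻¹ * (((2 * lam : ℝ) : Quaternion ℝ) * ζ' ℓ)) ∧
    B⁻¹ * ((((1 - ∑ ℓ, ‖qdil ℓ‖ ^ 2 : ℝ)) : Quaternion ℝ) - ωdil) =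
      D⁻¹ * (1 + ζlast - ((lam ^ 2 : ℝ) : Quaternion ℝ) * (1 - ζlast)) := by
  set u : Quaternion ℝ := 1 + ζlast with hu'
  have hu : u ≠ 0 := by
    intro h
    rw [hu'] at h; exact hpole (eq_neg_of_add_eq_zero_left (add_comm 1 ζlast ▸ h))
  have htwo : ((2 : ℝ) : Quaternion ℝ) = 2 := by
    have h12 : ((2:ℝ) : Quaternion ℝ) = ((1:ℝ):Quaternion ℝ) + ((1:ℝ):Quaternion ℝ) := by
      rw [← Quaternion.coe_add]; norm_num
    rw [h12, Quaternion.coe_one]; norm_num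
  have hinv : u⁻¹ = ((normSq u : ℝ))⁻¹ • star u := rfl
  set x : Quaternion ℝ := u⁻¹ * (1 - ζlast) with hx
  -- real part of x
  have hsre : (star u * (1 - ζlast)).re = 1 - normSq ζlast := by
    have h1 : star u * (1 - ζlast)
        = 1 - ζlast + star ζlast - ((normSq ζlast : ℝ) : Quaternion ℝ) := by
      rw [hu', star_add, star_one, ← star_mul_self ζlast]; noncomm_ring
    rw [h1]; simp
  have hxre : x.re = (normSq u)⁻¹ * (1 - normSq ζlast) := by
    rw [hx, hinv, smul_mul_assoc, ← hsre]
    simp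
  have hnormSqlast : normSq ζlast = ‖ζlast‖ ^ 2 := by
    rw [normSq_eq_norm_mul_self, sq]
  have hqsum : (∑ ℓ, ‖q ℓ‖ ^ 2) = x.re := by
    have h2 : ∀ ℓ, ‖q ℓ‖ ^ 2 = (normSq u)⁻¹ * ‖ζ' ℓ‖ ^ 2 := by
      intro ℓ
      rw [hq, norm_mul, mul_pow, norm_inv]
      congr 1
      rw [inv_pow, sq, ← normSq_eq_norm_mul_self]
    rw [hxre]
    simp_rw [h2, ← mul_sum]
    congr 1
    rw [hnormSqlast]; linarith [hsphere]
  have hX : ((∑ ℓ, ‖q ℓ‖ ^ 2 : ℝ) : Quaternion ℝ) + ω = x := by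
    rw [hω, hqsum]; exact re_add_im x
  have hsumdil : (∑ ℓ, ‖qdil ℓ‖ ^ 2) = lam ^ 2 * ∑ ℓ, ‖q ℓ‖ ^ 2 := by
    rw [mul_sum]
    refine Finset.sum_congr rfl fun ℓ _ => ?_
    rw [hqdil, norm_mul, mul_pow, norm_coe, Real.norm_eq_abs, sq_abs]
  have hBx : B = 1 + ((lam ^ 2 : ℝ) : Quaternion ℝ) * x := by
    rw [hB, hsumdil, hωdil, ← hX]
    push_cast
    noncomm_ring
  have hcomm : ∀ (r : ℝ) (a b : Quaternion ℝ), a * (((r : ℝ) : Quaternion ℝ) * b)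
      = ((r : ℝ) : Quaternion ℝ) * (a * b) := by
    intro r a b
    simp [coe_mul_eq_smul, mul_smul_comm]
  have hBD : B = u⁻¹ * D := by
    rw [hBx, hD, mul_add, inv_mul_cancel₀ hu, hcomm, ← hx]
  have hBinv : B⁻¹ = D⁻¹ * u := by rw [hBD, mul_inv_rev, inv_inv]
  constructor
  · intro ℓ
    rw [hBinv, hqdil, hq, mul_assoc]
    congr 1
    rw [Quaternion.coe_mul, ← htwo]
    simp only [coe_mul_eq_smul, mul_smul_comm, smul_smul, smul_mul_assoc]
    rw [← mul_assoc, mul_inv_cancel₀ hu, one_mul, mul_comm]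
  · have hY : (((1 - ∑ ℓ, ‖qdil ℓ‖ ^ 2 : ℝ)) : Quaternion ℝ) - ωdil
        = (1 : Quaternion ℝ) - ((lam ^ 2 : ℝ) : Quaternion ℝ) * x := by
      rw [hsumdil, hωdil, ← hX]
      push_cast
      noncomm_ring
    have hZ : (1 : Quaternion ℝ) - ((lam ^ 2 : ℝ) : Quaternion ℝ) * x
        = u⁻¹ * (1 + ζlast - ((lam ^ 2 : ℝ) : Quaternion ℝ) * (1 - ζlast)) := by
      rw [← hu', mul_sub, inv_mul_cancel₀ hu, hcomm, ← hx]
    rw [hBinv, hY, hZ, mul_assoc, ← mul_assoc u, mul_inv_cancel₀ hu, one_mul]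
end
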